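/- Let a > −1 and ε ≥ 0 be real and L ≥ 2 an integer. Let φ ∈ F(ε,L), and suppose φ = Σ_{k≥0} c_k·g_k and, for each m ≥ 1, e_m = Σ_{k≥0} E_{m,k}·g_k, as finite linear combinations of the functions g_k = g_k(·; a, ε, L) (identities valid at every complex t where all terms are defined). Define Res_{A_m}(φ) := lim_{t→A_m} (t−A_m)·φ(t) and φ(∞) := lim_{t→∞} φ(t). Then for every k ≥ 1, c_k = Σ_{m≥k} Res_{A_m}(φ)·E_{m,k}, and c_0 = φ(∞) + Σ_{m≥1} Res_{A_m}(φ)·E_{m,0}; in each sum only finitely many terms are nonzero (since φ has only finitely many poles). -/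

import Mathlib

open Finset

/-- Pochhammer symbol over `ℂ`. -/
noncomputable def pochC (x : ℂ) (n : ℕ) : ℂ := (ascPochhammer ℂ n).eval x

/-- `g_k(t; a, ε, L)`, the terminating ₄F₃-type series. -/
noncomputable def gfun (a eps : ℝ) (L k : ℕ) (t : ℂ) : ℂ :=
  ∑ n ∈ Finset.range (k+1),
    (pochC (-(k:ℂ)) n * pochC ((k:ℂ) + 2*(eps:ℂ)) n * pochC (L:ℂ) n * pochC ((L:ℂ) + (a:ℂ)) n) /
    (pochC (-t + (L:ℂ) + (eps:ℂ)) n * pochC (t + (L:ℂ) + (eps:ℂ)) n * pochC ((a:ℂ)+1) n *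
      (Nat.factorial n : ℂ))

/-- `e_0 ≡ 1` and, for `m ≥ 1`, `e_m(t) = 1/(t−A_m) − 1/(t+A_m)` with `A_m = L+ε+m−1`. -/
noncomputable def efun (eps : ℝ) (L m : ℕ) (t : ℂ) : ℂ :=
  if m = 0 then 1
  else 1/(t - ((L:ℂ) + (eps:ℂ) + (m:ℂ) - 1)) - 1/(t + ((L:ℂ) + (eps:ℂ) + (m:ℂ) - 1))

/-- `t` avoids all the points `±A_m = ±(L+ε+m−1)`, `m ≥ 1`. -/
def Adm (eps : ℝ) (L : ℕ) (t : ℂ) : Prop :=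
  ∀ m : ℕ, t^2 ≠ ((L:ℂ) + (eps:ℂ) + (m:ℂ))^2

/-- Membership in the space `F(ε,L)`: even rational functions regular at `∞` whose only
singularities are simple poles contained in `{±A_m : m ≥ 1}`; such functions are exactly
the finite linear combinations `c₀ + Σ_{m≥1} r_m (1/(t−A_m) − 1/(t+A_m))`
(partial-fraction expansion), where `r_m` is the residue at `A_m`. -/
def InF (eps : ℝ) (L : ℕ) (φ : ℂ → ℂ) : Prop :=
  ∃ r : ℕ → ℂ, (Function.support r).Finite ∧
    ∀ t : ℂ, Adm eps L t → φ t = ∑ᶠ m : ℕ, r m * efun eps L m t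


open Filter


lemma pochC_prod (x : ℂ) (n : ℕ) : pochC x n = ∏ j ∈ range n, (x + j) := by
  induction n with
  | zero => simp [pochC]
  | succ n ih => rw [pochC, ascPochhammer_succ_eval, ← pochC, ih, Finset.prod_range_succ]

noncomputable def qq (eps : ℝ) (L : ℕ) (j : ℕ) : ℂ := (L:ℂ) + (eps:ℂ) + (j:ℂ)

lemma qq_eq_ofReal' (eps : ℝ) (L j : ℕ) : qq eps L j = (((L:ℝ) + eps + j : ℝ) : ℂ) := by
  simp [qq]

lemma qq_real_ge' {eps : ℝ} {L : ℕ} (heps : 0 ≤ eps) (hL : 2 ≤ L) (j : ℕ) :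
    (2:ℝ) ≤ (L:ℝ) + eps + j := by
  have h : (2:ℝ) ≤ (L:ℝ) := by exact_mod_cast hL
  have : (0:ℝ) ≤ (j:ℝ) := Nat.cast_nonneg j
  linarith

noncomputable def dd (eps : ℝ) (L n : ℕ) (t : ℂ) : ℂ := ∏ j ∈ range n, (qq eps L j ^ 2 - t ^ 2)

noncomputable def bb (a eps : ℝ) (L k n : ℕ) : ℂ :=
  pochC (-(k:ℂ)) n * pochC ((k:ℂ) + 2*(eps:ℂ)) n * pochC (L:ℂ) n * pochC ((L:ℂ) + (a:ℂ)) n /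
    (pochC ((a:ℂ)+1) n * (Nat.factorial n : ℂ))

lemma poch_mul_poch (eps : ℝ) (L n : ℕ) (t : ℂ) :
    pochC (-t + (L:ℂ) + (eps:ℂ)) n * pochC (t + (L:ℂ) + (eps:ℂ)) n = dd eps L n t := by
  rw [pochC_prod, pochC_prod, dd, ← Finset.prod_mul_distrib]
  refine Finset.prod_congr rfl fun j _ => ?_
  rw [qq]; ring

lemma gfun_eq (a eps : ℝ) (L k : ℕ) (t : ℂ) :
    gfun a eps L k t = ∑ n ∈ range (k+1), bb a eps L k n * (dd eps L n t)⁻¹ := by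
  refine Finset.sum_congr rfl fun n _ => ?_
  rw [← poch_mul_poch, bb, div_eq_mul_inv, div_eq_mul_inv]
  rw [mul_inv, mul_inv, mul_inv]
  ring

noncomputable def pp (x : ℝ) : ℂ := (x:ℂ) * Complex.I

lemma tendsto_pp : Tendsto pp atTop (Bornology.cobounded ℂ) := by
  rw [← tendsto_norm_atTop_iff_cobounded]
  have : ∀ x : ℝ, ‖pp x‖ = |x| := by
    intro x; simp [pp]
  simp only [this]
  exact tendsto_abs_atTop_atTop

lemma adm_pp {eps : ℝ} {L : ℕ} (heps : 0 ≤ eps) (hL : 2 ≤ L) (x : ℝ) : Adm eps L (pp x) := by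
  intro m hc
  have h1 : (pp x)^2 = ((-(x^2) : ℝ) : ℂ) := by
    simp only [pp]; push_cast; ring_nf; rw [Complex.I_sq]; ring
  rw [h1] at hc
  have h2 : ((L:ℂ) + (eps:ℂ) + (m:ℂ)) = (((L:ℝ) + eps + m : ℝ) : ℂ) := by push_cast; ring
  rw [h2, ← Complex.ofReal_pow, Complex.ofReal_inj] at hc
  have := qq_real_ge' heps hL m
  nlinarith


lemma dd_pp (eps : ℝ) (L n : ℕ) (x : ℝ) :
    dd eps L n (pp x) = ((∏ j ∈ range n, (((L:ℝ) + eps + j)^2 + x^2) : ℝ) : ℂ) := by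
  rw [dd, Complex.ofReal_prod]
  refine Finset.prod_congr rfl fun j _ => ?_
  rw [qq_eq_ofReal']
  simp only [pp]
  push_cast
  ring_nf
  rw [Complex.I_sq]
  ring

lemma tendsto_dd_inv_pp {eps : ℝ} {L : ℕ} (heps : 0 ≤ eps) (hL : 2 ≤ L) {n : ℕ} (hn : 1 ≤ n) :
    Tendsto (fun x : ℝ => (dd eps L n (pp x))⁻¹) atTop (nhds 0) := by
  have hcb : Tendsto (fun x : ℝ => dd eps L n (pp x)) atTop (Bornology.cobounded ℂ) := by
    rw [← tendsto_norm_atTop_iff_cobounded]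
    apply tendsto_atTop_mono' _ (Filter.Eventually.of_forall ?_) (tendsto_pow_atTop (n := 2) (by norm_num))
    intro x
    rw [dd_pp, Complex.norm_real]
    have hle : ∀ j ∈ range n, (1:ℝ) ≤ ((L:ℝ) + eps + j)^2 + x^2 := by
      intro j _
      have := qq_real_ge' heps hL j
      nlinarith
    have hx2 : x^2 = ∏ j ∈ range n, (if j = 0 then x^2 else 1) := by
      rw [Finset.prod_ite_eq' (range n) 0 (fun _ => x^2), if_pos (Finset.mem_range.mpr hn)]
    calc x^2 = ∏ j ∈ range n, (if j = 0 then x^2 else 1) := hx2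
    _ ≤ ∏ j ∈ range n, (((L:ℝ) + eps + j)^2 + x^2) := by
          refine Finset.prod_le_prod (fun j _ => ?_) (fun j hj => ?_)
          · split <;> positivity
          · split
            · have := qq_real_ge' heps hL j; nlinarith
            · exact hle j hj
    _ ≤ |∏ j ∈ range n, (((L:ℝ) + eps + j)^2 + x^2)| := le_abs_self _
  exact tendsto_inv₀_cobounded.comp hcb

lemma bb_zero (a eps : ℝ) (L k : ℕ) : bb a eps L k 0 = 1 := by
  simp [bb, pochC]

lemma tendsto_gfun_pp {a eps : ℝ} {L : ℕ} (heps : 0 ≤ eps) (hL : 2 ≤ L) (k : ℕ) :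
    Tendsto (fun x : ℝ => gfun a eps L k (pp x)) atTop (nhds 1) := by
  simp only [gfun_eq]
  have h : Tendsto (fun x : ℝ => ∑ n ∈ range (k+1), bb a eps L k n * (dd eps L n (pp x))⁻¹)
      atTop (nhds (∑ n ∈ range (k+1), bb a eps L k n * (if n = 0 then 1 else 0))) := by
    refine tendsto_finset_sum _ fun n _ => ?_
    rcases Nat.eq_zero_or_pos n with h0 | h0
    · subst h0
      simp only [if_pos rfl, dd]
      simpa using (tendsto_const_nhds (α := ℝ) (x := bb a eps L k 0 * 1))
    · rw [if_neg (Nat.pos_iff_ne_zero.mp h0)]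
      simpa using (tendsto_dd_inv_pp heps hL h0).const_mul (bb a eps L k n)
  convert h using 2
  simp [mul_ite, bb_zero]

lemma efun_eq {eps : ℝ} {L m : ℕ} (hm : 1 ≤ m) (t : ℂ) :
    efun eps L m t = (t - qq eps L (m-1))⁻¹ - (t + qq eps L (m-1))⁻¹ := by
  have h : (L:ℂ) + (eps:ℂ) + (m:ℂ) - 1 = qq eps L (m-1) := by
    rw [qq]
    have : ((m - 1 : ℕ) : ℂ) = (m : ℂ) - 1 := by
      push_cast [Nat.cast_sub hm]; ring
    rw [this]; ring
  rw [efun, if_neg (by omega), h, one_div, one_div]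

lemma tendsto_cobounded_sub (z : ℂ) :
    Tendsto (fun x : ℝ => pp x - z) atTop (Bornology.cobounded ℂ) := by
  rw [← tendsto_norm_atTop_iff_cobounded]
  apply tendsto_atTop_mono' _ (Filter.Eventually.of_forall fun x => ?_)
      (tendsto_atTop_add_const_right _ (-‖z‖) tendsto_abs_atTop_atTop)
  have h1 : ‖pp x‖ = |x| := by simp [pp]
  have := norm_sub_norm_le (pp x) z
  rw [h1] at this
  linarith

lemma tendsto_efun_pp {eps : ℝ} {L : ℕ} {m : ℕ} (hm : 1 ≤ m) :
    Tendsto (fun x : ℝ => efun eps L m (pp x)) atTop (nhds 0) := by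
  simp only [efun_eq hm]
  have h1 : Tendsto (fun x : ℝ => (pp x - qq eps L (m-1))⁻¹) atTop (nhds 0) :=
    tendsto_inv₀_cobounded.comp (tendsto_cobounded_sub _)
  have h2 : Tendsto (fun x : ℝ => (pp x + qq eps L (m-1))⁻¹) atTop (nhds 0) := by
    have := tendsto_inv₀_cobounded.comp (tendsto_cobounded_sub (-(qq eps L (m-1))))
    simpa [sub_neg_eq_add, Function.comp_def] using this
  simpa using h1.sub h2

lemma qq_ne_qq {eps : ℝ} {L : ℕ} {j μ : ℕ} (h : j ≠ μ) : qq eps L j ≠ qq eps L μ := by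
  simp only [qq]
  intro hc
  have : (j:ℂ) = (μ:ℂ) := by linear_combination hc
  exact h (by exact_mod_cast this)

lemma eventually_adm {eps : ℝ} {L : ℕ} (heps : 0 ≤ eps) (hL : 2 ≤ L) (μ : ℕ) :
    ∀ᶠ t in nhdsWithin (qq eps L μ) {(qq eps L μ)}ᶜ, Adm eps L t ∧ t ≠ qq eps L μ := by
  have hball : Metric.ball (qq eps L μ) 1 ∈ nhds (qq eps L μ) := Metric.ball_mem_nhds _ one_pos
  filter_upwards [mem_nhdsWithin_of_mem_nhds hball, self_mem_nhdsWithin] with t ht hne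
  rw [Set.mem_compl_singleton_iff] at hne
  refine ⟨fun m hc => ?_, hne⟩
  rw [Metric.mem_ball] at ht
  have h2 : ((L:ℂ) + (eps:ℂ) + (m:ℂ)) = qq eps L m := rfl
  rw [h2] at hc
  have hfac : (t - qq eps L m) * (t + qq eps L m) = 0 := by linear_combination hc
  rcases mul_eq_zero.mp hfac with h | h
  · have ht' : t = qq eps L m := by linear_combination h
    subst ht'
    by_cases hmμ : m = μ
    · exact hne (by rw [hmμ])
    · have : dist (qq eps L m) (qq eps L μ) = |(m:ℝ) - (μ:ℝ)| := by
        rw [Complex.dist_eq, qq_eq_ofReal', qq_eq_ofReal', ← Complex.ofReal_sub,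
          Complex.norm_real, Real.norm_eq_abs]
        ring_nf
      have hge : (1:ℝ) ≤ |(m:ℝ) - (μ:ℝ)| := by
        have hcast : ((m:ℝ) - (μ:ℝ)) = (((m:ℤ) - (μ:ℤ) : ℤ) : ℝ) := by push_cast; ring
        rw [hcast, ← Int.cast_abs]
        have : (1:ℤ) ≤ |(m:ℤ) - (μ:ℤ)| :=
          Int.one_le_abs (sub_ne_zero.mpr (by exact_mod_cast hmμ))
        exact_mod_cast this
      rw [this] at ht; linarith
  · have ht' : t = -qq eps L m := by linear_combination h
    subst ht'
    have : dist (-qq eps L m) (qq eps L μ) = ((L:ℝ) + eps + m) + ((L:ℝ) + eps + μ) := by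
      rw [Complex.dist_eq, qq_eq_ofReal', qq_eq_ofReal']
      have : -((((L:ℝ) + eps + m : ℝ)):ℂ) - (((L:ℝ) + eps + μ : ℝ):ℂ)
          = ((-((L:ℝ) + eps + m) - ((L:ℝ) + eps + μ) : ℝ) : ℂ) := by push_cast; ring
      rw [this, Complex.norm_real, Real.norm_eq_abs]
      have h1 := qq_real_ge' heps hL m
      have h2 := qq_real_ge' heps hL μ
      rw [abs_of_nonpos (by linarith)]; ring
    rw [this] at ht
    have h1 := qq_real_ge' heps hL m
    have h2 := qq_real_ge' heps hL μ
    linarith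

noncomputable def ww (eps : ℝ) (L n μ : ℕ) : ℂ :=
  -(qq eps L μ + qq eps L μ)⁻¹ * ∏ j ∈ (range n).erase μ, (qq eps L j ^ 2 - qq eps L μ ^ 2)⁻¹

noncomputable def rr (a eps : ℝ) (L k μ : ℕ) : ℂ :=
  ∑ n ∈ range (k+1), bb a eps L k n * (if μ < n then ww eps L n μ else 0)

lemma continuous_dd (eps : ℝ) (L n : ℕ) : Continuous (dd eps L n) := by
  unfold dd
  exact continuous_finset_prod _ fun j _ => continuous_const.sub (continuous_pow 2)

lemma qq_sq_sub_sq_ne' {eps : ℝ} {L : ℕ} (heps : 0 ≤ eps) (hL : 2 ≤ L) {j μ : ℕ} (h : j ≠ μ) :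
    qq eps L j ^ 2 - qq eps L μ ^ 2 ≠ 0 := by
  rw [qq_eq_ofReal', qq_eq_ofReal', sub_ne_zero]
  have h2j := qq_real_ge' heps hL j
  have h2μ := qq_real_ge' heps hL μ
  intro hc
  have hc' : ((L:ℝ) + eps + j) ^ 2 = ((L:ℝ) + eps + μ) ^ 2 := by exact_mod_cast hc
  have h3 : (L:ℝ) + eps + j = (L:ℝ) + eps + μ := by nlinarith
  have h4 : (j:ℝ) = μ := by linarith
  exact h (by exact_mod_cast h4)

lemma qq_add_qq_ne' {eps : ℝ} {L : ℕ} (heps : 0 ≤ eps) (hL : 2 ≤ L) (j μ : ℕ) :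
    qq eps L j + qq eps L μ ≠ 0 := by
  rw [qq_eq_ofReal', qq_eq_ofReal', ← Complex.ofReal_add, Complex.ofReal_ne_zero]
  have h1 := qq_real_ge' heps hL j; have h2 := qq_real_ge' heps hL μ
  linarith

lemma tendsto_res_term {eps : ℝ} {L : ℕ} (heps : 0 ≤ eps) (hL : 2 ≤ L) (μ n : ℕ) :
    Tendsto (fun t => (t - qq eps L μ) * (dd eps L n t)⁻¹)
      (nhdsWithin (qq eps L μ) {(qq eps L μ)}ᶜ)
      (nhds (if μ < n then ww eps L n μ else 0)) := by
  by_cases hμn : μ < n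
  · rw [if_pos hμn]
    set A := qq eps L μ with hA
    have hAne : ∀ t, t ≠ A → t ∈ {t : ℂ | Adm eps L t} → True := fun _ _ _ => trivial
    -- limit function
    have hG : Tendsto (fun t : ℂ => -(t + A)⁻¹ * ∏ j ∈ (range n).erase μ, (qq eps L j ^ 2 - t ^ 2)⁻¹)
        (nhds A) (nhds (ww eps L n μ)) := by
      have h1 : Tendsto (fun t : ℂ => -(t + A)⁻¹) (nhds A) (nhds (-(A + A)⁻¹)) := by
        refine Tendsto.neg (Tendsto.inv₀ ?_ ?_)
        · exact (continuous_id.add continuous_const).tendsto A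
        · exact qq_add_qq_ne' heps hL μ μ
      have h2 : Tendsto (fun t : ℂ => ∏ j ∈ (range n).erase μ, (qq eps L j ^ 2 - t ^ 2)⁻¹)
          (nhds A) (nhds (∏ j ∈ (range n).erase μ, (qq eps L j ^ 2 - A ^ 2)⁻¹)) := by
        refine tendsto_finset_prod _ fun j hj => ?_
        refine Tendsto.inv₀ ((continuous_const.sub (continuous_pow 2)).tendsto A) ?_
        exact qq_sq_sub_sq_ne' heps hL (Finset.mem_erase.mp hj).1
      simpa [ww] using h1.mul h2
    refine Tendsto.congr' ?_ (hG.mono_left nhdsWithin_le_nhds)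
    filter_upwards [eventually_adm heps hL μ] with t ⟨hadm, hne⟩
    have hmem : μ ∈ range n := Finset.mem_range.mpr hμn
    have hdd : dd eps L n t = (qq eps L μ ^ 2 - t ^ 2) * ∏ j ∈ (range n).erase μ, (qq eps L j ^ 2 - t ^ 2) :=
      (Finset.mul_prod_erase (range n) _ hmem).symm
    have hne1 : A - t ≠ 0 := sub_ne_zero.mpr (Ne.symm hne)
    have hfac : qq eps L μ ^ 2 - t ^ 2 = (A - t) * (A + t) := by rw [hA]; ring
    rw [Finset.prod_inv_distrib, hdd, hfac, mul_inv, mul_inv]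
    have h2 : (A - t) * (A - t)⁻¹ = 1 := mul_inv_cancel₀ hne1
    linear_combination ((t + A)⁻¹ * (∏ j ∈ (range n).erase μ, (qq eps L j ^ 2 - t ^ 2))⁻¹) * h2
  · rw [if_neg hμn]
    have hddne : dd eps L n (qq eps L μ) ≠ 0 := by
      rw [dd]
      refine Finset.prod_ne_zero_iff.mpr fun j hj => ?_
      have : j ≠ μ := by have := Finset.mem_range.mp hj; omega
      exact qq_sq_sub_sq_ne' heps hL this
    have hcont : Tendsto (fun t : ℂ => (t - qq eps L μ) * (dd eps L n t)⁻¹) (nhds (qq eps L μ))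
        (nhds ((qq eps L μ - qq eps L μ) * (dd eps L n (qq eps L μ))⁻¹)) := by
      exact ((continuous_id.sub continuous_const).tendsto _).mul
        (Tendsto.inv₀ ((continuous_dd eps L n).tendsto _) hddne)
    simpa using hcont.mono_left nhdsWithin_le_nhds

lemma tendsto_res_gfun {a eps : ℝ} {L : ℕ} (heps : 0 ≤ eps) (hL : 2 ≤ L) (k μ : ℕ) :
    Tendsto (fun t => (t - qq eps L μ) * gfun a eps L k t)
      (nhdsWithin (qq eps L μ) {(qq eps L μ)}ᶜ) (nhds (rr a eps L k μ)) := by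
  have h : Tendsto (fun t => ∑ n ∈ range (k+1),
        bb a eps L k n * ((t - qq eps L μ) * (dd eps L n t)⁻¹))
      (nhdsWithin (qq eps L μ) {(qq eps L μ)}ᶜ) (nhds (rr a eps L k μ)) := by
    rw [rr]
    exact tendsto_finset_sum _ fun n _ => (tendsto_res_term heps hL μ n).const_mul _
  refine h.congr fun t => ?_
  rw [gfun_eq, Finset.mul_sum]
  exact Finset.sum_congr rfl fun n _ => by ring

lemma tendsto_res_sum {a eps : ℝ} {L : ℕ} (heps : 0 ≤ eps) (hL : 2 ≤ L)
    (d : ℕ → ℂ) (N μ : ℕ) :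
    Tendsto (fun t => (t - qq eps L μ) * ∑ k ∈ range N, d k * gfun a eps L k t)
      (nhdsWithin (qq eps L μ) {(qq eps L μ)}ᶜ)
      (nhds (∑ k ∈ range N, d k * rr a eps L k μ)) := by
  have h : Tendsto (fun t => ∑ k ∈ range N,
        d k * ((t - qq eps L μ) * gfun a eps L k t))
      (nhdsWithin (qq eps L μ) {(qq eps L μ)}ᶜ)
      (nhds (∑ k ∈ range N, d k * rr a eps L k μ)) :=
    tendsto_finset_sum _ fun k _ => (tendsto_res_gfun heps hL k μ).const_mul _
  refine h.congr fun t => ?_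
  rw [Finset.mul_sum]
  exact Finset.sum_congr rfl fun n _ => by ring

lemma tendsto_res_efun {eps : ℝ} {L : ℕ} (heps : 0 ≤ eps) (hL : 2 ≤ L) {m : ℕ} (hm : 1 ≤ m)
    (μ : ℕ) :
    Tendsto (fun t => (t - qq eps L μ) * efun eps L m t)
      (nhdsWithin (qq eps L μ) {(qq eps L μ)}ᶜ)
      (nhds (if m = μ + 1 then 1 else 0)) := by
  by_cases hmμ : m = μ + 1
  · rw [if_pos hmμ]
    have hm1 : m - 1 = μ := by omega
    have hG : Tendsto (fun t : ℂ => 1 - (t - qq eps L μ) * (t + qq eps L μ)⁻¹)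
        (nhds (qq eps L μ)) (nhds 1) := by
      have h1 : Tendsto (fun t : ℂ => (t - qq eps L μ) * (t + qq eps L μ)⁻¹)
          (nhds (qq eps L μ)) (nhds ((qq eps L μ - qq eps L μ) * (qq eps L μ + qq eps L μ)⁻¹)) :=
        ((continuous_id.sub continuous_const).tendsto _).mul
          (Tendsto.inv₀ ((continuous_id.add continuous_const).tendsto _)
            (qq_add_qq_ne' heps hL μ μ))
      simpa using (tendsto_const_nhds.sub h1)
    refine Tendsto.congr' ?_ (hG.mono_left nhdsWithin_le_nhds)
    filter_upwards [self_mem_nhdsWithin] with t ht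
    rw [Set.mem_compl_singleton_iff] at ht
    rw [efun_eq hm, hm1]
    have hne : t - qq eps L μ ≠ 0 := sub_ne_zero.mpr ht
    have h2 : (t - qq eps L μ) * (t - qq eps L μ)⁻¹ = 1 := mul_inv_cancel₀ hne
    linear_combination -h2
  · rw [if_neg hmμ]
    have hμm : m - 1 ≠ μ := by omega
    have hne1 : qq eps L μ - qq eps L (m-1) ≠ 0 :=
      sub_ne_zero.mpr (qq_ne_qq (fun h : μ = m - 1 => hμm h.symm))
    have hne2 : qq eps L μ + qq eps L (m-1) ≠ 0 := qq_add_qq_ne' heps hL μ (m-1)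
    have hG : Tendsto (fun t : ℂ => (t - qq eps L μ) *
          ((t - qq eps L (m-1))⁻¹ - (t + qq eps L (m-1))⁻¹))
        (nhds (qq eps L μ)) (nhds 0) := by
      have h1 : Tendsto (fun t : ℂ => (t - qq eps L (m-1))⁻¹ - (t + qq eps L (m-1))⁻¹)
          (nhds (qq eps L μ)) (nhds ((qq eps L μ - qq eps L (m-1))⁻¹
            - (qq eps L μ + qq eps L (m-1))⁻¹)) :=
        (Tendsto.inv₀ ((continuous_id.sub continuous_const).tendsto _) hne1).sub
          (Tendsto.inv₀ ((continuous_id.add continuous_const).tendsto _) hne2)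
      have h0 : Tendsto (fun t : ℂ => t - qq eps L μ) (nhds (qq eps L μ)) (nhds 0) := by
        have h' : Tendsto (fun t : ℂ => t - qq eps L μ) (nhds (qq eps L μ))
            (nhds (qq eps L μ - qq eps L μ)) :=
          (continuous_id.sub continuous_const).tendsto _
        simpa using h'
      simpa using h0.mul h1
    refine Tendsto.congr (fun t => ?_) (hG.mono_left nhdsWithin_le_nhds)
    rw [efun_eq hm]

lemma rr_eq_zero {a eps : ℝ} {L : ℕ} {k μ : ℕ} (h : k ≤ μ) : rr a eps L k μ = 0 := by
  rw [rr]
  refine Finset.sum_eq_zero fun n hn => ?_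
  rw [if_neg (by have := Finset.mem_range.mp hn; omega), mul_zero]

lemma bb_ne_zero {a eps : ℝ} {L : ℕ} (ha : -1 < a) (heps : 0 ≤ eps) (hL : 2 ≤ L)
    {k : ℕ} (hk : 1 ≤ k) : bb a eps L k k ≠ 0 := by
  rw [bb]
  have hfac : ∀ x : ℂ, (∀ j ∈ range k, x + (j:ℂ) ≠ 0) → pochC x k ≠ 0 := by
    intro x hx
    rw [pochC_prod]
    exact Finset.prod_ne_zero_iff.mpr hx
  refine div_ne_zero (mul_ne_zero (mul_ne_zero (mul_ne_zero ?_ ?_) ?_) ?_) (mul_ne_zero ?_ ?_)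
  · refine hfac _ fun j hj => ?_
    have hjk : j < k := Finset.mem_range.mp hj
    intro hc
    have : (j:ℂ) = (k:ℂ) := by linear_combination hc
    have : j = k := by exact_mod_cast this
    omega
  · refine hfac _ fun j hj => ?_
    have h1 : ((k:ℂ) + 2*(eps:ℂ)) + (j:ℂ) = (((k:ℝ) + 2*eps + j : ℝ) : ℂ) := by push_cast; ring
    rw [h1, Complex.ofReal_ne_zero]
    have : (1:ℝ) ≤ (k:ℝ) := by exact_mod_cast hk
    have : (0:ℝ) ≤ (j:ℝ) := Nat.cast_nonneg j
    nlinarith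
  · refine hfac _ fun j hj => ?_
    have h1 : (L:ℂ) + (j:ℂ) = (((L:ℝ) + j : ℝ) : ℂ) := by push_cast; ring
    rw [h1, Complex.ofReal_ne_zero]
    have : (2:ℝ) ≤ (L:ℝ) := by exact_mod_cast hL
    have : (0:ℝ) ≤ (j:ℝ) := Nat.cast_nonneg j
    nlinarith
  · refine hfac _ fun j hj => ?_
    have h1 : ((L:ℂ) + (a:ℂ)) + (j:ℂ) = (((L:ℝ) + a + j : ℝ) : ℂ) := by push_cast; ring
    rw [h1, Complex.ofReal_ne_zero]
    have : (2:ℝ) ≤ (L:ℝ) := by exact_mod_cast hL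
    have : (0:ℝ) ≤ (j:ℝ) := Nat.cast_nonneg j
    nlinarith
  · refine hfac _ fun j hj => ?_
    have h1 : ((a:ℂ) + 1) + (j:ℂ) = ((a + 1 + j : ℝ) : ℂ) := by push_cast; ring
    rw [h1, Complex.ofReal_ne_zero]
    have : (0:ℝ) ≤ (j:ℝ) := Nat.cast_nonneg j
    nlinarith
  · exact_mod_cast Nat.factorial_ne_zero k

lemma ww_ne_zero {eps : ℝ} {L : ℕ} (heps : 0 ≤ eps) (hL : 2 ≤ L) (n μ : ℕ) :
    ww eps L n μ ≠ 0 := by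
  rw [ww]
  refine mul_ne_zero (neg_ne_zero.mpr (inv_ne_zero (qq_add_qq_ne' heps hL μ μ))) ?_
  refine Finset.prod_ne_zero_iff.mpr fun j hj => ?_
  exact inv_ne_zero (qq_sq_sub_sq_ne' heps hL (Finset.mem_erase.mp hj).1)

lemma rr_top_ne_zero {a eps : ℝ} {L : ℕ} (ha : -1 < a) (heps : 0 ≤ eps) (hL : 2 ≤ L)
    {k : ℕ} (hk : 1 ≤ k) : rr a eps L k (k-1) ≠ 0 := by
  rw [rr]
  rw [Finset.sum_eq_single k]
  · rw [if_pos (by omega)]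
    exact mul_ne_zero (bb_ne_zero ha heps hL hk) (ww_ne_zero heps hL k (k-1))
  · intro n hn hnk
    rw [if_neg (by have := Finset.mem_range.mp hn; omega), mul_zero]
  · intro h
    exact absurd (Finset.mem_range.mpr (by omega)) h

lemma tri {a eps : ℝ} {L : ℕ} (ha : -1 < a) (heps : 0 ≤ eps) (hL : 2 ≤ L)
    (d : ℕ → ℂ) (N m₀ : ℕ) (hm₀ : 1 ≤ m₀)
    (hd0 : ∀ k, N ≤ k → d k = 0)
    (h : ∀ μ : ℕ, m₀ ≤ μ + 1 → ∑ k ∈ range N, d k * rr a eps L k μ = 0) :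
    ∀ k, m₀ ≤ k → d k = 0 := by
  have aux : ∀ i k, m₀ ≤ k → N ≤ k + i → d k = 0 := by
    intro i
    induction i with
    | zero => intro k hk hN; exact hd0 k (by omega)
    | succ i ih =>
      intro k hk hN
      by_cases hNi : N ≤ k + i
      · exact ih k hk hNi
      · have h0 := h (k-1) (by omega)
        rw [Finset.sum_eq_single k] at h0
        · rcases mul_eq_zero.mp h0 with h' | h'
          · exact h'
          · exact absurd h' (rr_top_ne_zero ha heps hL (by omega))
        · intro n hn hnk
          rcases lt_or_gt_of_ne hnk with hlt | hgt
          · rw [rr_eq_zero (by omega), mul_zero]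
          · rw [ih n (by omega) (by omega), zero_mul]
        · intro hkmem; exact absurd (Finset.mem_range.mpr (by omega)) hkmem
  intro k hk; exact aux N k hk (by omega)

example (x : ℂ) : (nhdsWithin x {x}ᶜ).NeBot := by infer_instance

lemma resid_eq {a eps : ℝ} {L : ℕ} (heps : 0 ≤ eps) (hL : 2 ≤ L)
    (d : ℕ → ℂ) (N : ℕ)
    (h : ∀ t : ℂ, Adm eps L t → ∑ k ∈ range N, d k * gfun a eps L k t = 0) (μ : ℕ) :
    ∑ k ∈ range N, d k * rr a eps L k μ = 0 := by
  have h1 := tendsto_res_sum (a := a) heps hL d N μ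
  have h2 : Tendsto (fun t => (t - qq eps L μ) * ∑ k ∈ range N, d k * gfun a eps L k t)
      (nhdsWithin (qq eps L μ) {(qq eps L μ)}ᶜ) (nhds 0) := by
    refine Tendsto.congr' ?_ (tendsto_const_nhds (x := (0:ℂ)))
    filter_upwards [eventually_adm heps hL μ] with t ht
    rw [h t ht.1, mul_zero]
  exact (tendsto_nhds_unique h2 h1).symm

lemma indep {a eps : ℝ} {L : ℕ} (ha : -1 < a) (heps : 0 ≤ eps) (hL : 2 ≤ L)
    (d : ℕ → ℂ) (N : ℕ) (hd0 : ∀ k, N ≤ k → d k = 0)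
    (h : ∀ t : ℂ, Adm eps L t → ∑ k ∈ range N, d k * gfun a eps L k t = 0) :
    ∀ k, d k = 0 := by
  have hres := resid_eq heps hL d N h
  have hpos : ∀ k, 1 ≤ k → d k = 0 :=
    tri ha heps hL d N 1 le_rfl hd0 (fun μ _ => hres μ)
  have hsum : ∑ k ∈ range N, d k = 0 := by
    have h1 : Tendsto (fun x : ℝ => ∑ k ∈ range N, d k * gfun a eps L k (pp x)) atTop
        (nhds (∑ k ∈ range N, d k * 1)) :=
      tendsto_finset_sum _ fun k _ => (tendsto_gfun_pp heps hL k).const_mul _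
    have h2 : Tendsto (fun x : ℝ => ∑ k ∈ range N, d k * gfun a eps L k (pp x)) atTop
        (nhds 0) := by
      refine Tendsto.congr' ?_ (tendsto_const_nhds (x := (0:ℂ)))
      filter_upwards with x
      rw [h (pp x) (adm_pp heps hL x)]
    have := tendsto_nhds_unique h1 h2
    simpa using this
  intro k
  rcases Nat.eq_zero_or_pos k with rfl | hk
  · rcases Nat.eq_zero_or_pos N with hN | hN
    · exact hd0 0 (by omega)
    · rw [Finset.sum_eq_single 0] at hsum
      · exact hsum
      · intro n hn hn0; exact hpos n (by omega)
      · intro h0; exact absurd (Finset.mem_range.mpr hN) h0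
  · exact hpos k hk

lemma E_tri {a eps : ℝ} {L : ℕ} (ha : -1 < a) (heps : 0 ≤ eps) (hL : 2 ≤ L)
    {m : ℕ} (hm : 1 ≤ m) (Em : ℕ → ℂ) (N : ℕ)
    (hE0 : ∀ k, N ≤ k → Em k = 0)
    (hEexp : ∀ t : ℂ, Adm eps L t → efun eps L m t = ∑ k ∈ range N, Em k * gfun a eps L k t) :
    ∀ k, m + 1 ≤ k → Em k = 0 := by
  refine tri ha heps hL Em N (m+1) (by omega) hE0 fun μ hμ => ?_
  have h1 := tendsto_res_sum (a := a) heps hL Em N μ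
  have h2 : Tendsto (fun t => (t - qq eps L μ) * ∑ k ∈ range N, Em k * gfun a eps L k t)
      (nhdsWithin (qq eps L μ) {(qq eps L μ)}ᶜ) (nhds (if m = μ + 1 then 1 else 0)) := by
    refine Tendsto.congr' ?_ (tendsto_res_efun heps hL hm μ)
    filter_upwards [eventually_adm heps hL μ] with t ht
    rw [hEexp t ht.1]
  have h3 := tendsto_nhds_unique h1 h2
  rw [h3, if_neg (by omega)]

lemma qq_point {eps : ℝ} {L : ℕ} {m : ℕ} (hm : 1 ≤ m) :
    (L:ℂ) + (eps:ℂ) + (m:ℂ) - 1 = qq eps L (m-1) := by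
  rw [qq]
  have h : ((m - 1 : ℕ) : ℂ) = (m : ℂ) - 1 := by push_cast [Nat.cast_sub hm]; ring
  rw [h]; ring

lemma efun_zero (eps : ℝ) (L : ℕ) (t : ℂ) : efun eps L 0 t = 1 := by simp [efun]

lemma gfun_zero (a eps : ℝ) (L : ℕ) (t : ℂ) : gfun a eps L 0 t = 1 := by
  simp [gfun, pochC]

lemma exists_bound {f : ℕ → ℂ} (hf : (Function.support f).Finite) :
    ∃ N, ∀ k, N ≤ k → f k = 0 := by
  refine ⟨hf.toFinset.sup id + 1, fun k hk => ?_⟩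
  by_contra h
  have hmem : k ∈ hf.toFinset := hf.mem_toFinset.mpr h
  have := Finset.le_sup (f := id) hmem
  simp only [id] at this
  omega

lemma tendsto_res_phi_sum {eps : ℝ} {L : ℕ} (heps : 0 ≤ eps) (hL : 2 ≤ L)
    (r : ℕ → ℂ) (T : Finset ℕ) (μ : ℕ) :
    Tendsto (fun t => (t - qq eps L μ) * ∑ j ∈ T, r j * efun eps L j t)
      (nhdsWithin (qq eps L μ) {(qq eps L μ)}ᶜ)
      (nhds (∑ j ∈ T, r j * (if j = μ + 1 then 1 else 0))) := by
  have h : Tendsto (fun t => ∑ j ∈ T, r j * ((t - qq eps L μ) * efun eps L j t))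
      (nhdsWithin (qq eps L μ) {(qq eps L μ)}ᶜ)
      (nhds (∑ j ∈ T, r j * (if j = μ + 1 then 1 else 0))) := by
    refine tendsto_finset_sum _ fun j _ => Tendsto.const_mul _ ?_
    rcases Nat.eq_zero_or_pos j with rfl | hj
    · rw [if_neg (by omega)]
      have hcont : Tendsto (fun t : ℂ => (t - qq eps L μ) * efun eps L 0 t)
          (nhds (qq eps L μ)) (nhds ((qq eps L μ - qq eps L μ) * efun eps L 0 (qq eps L μ))) := by
        refine ((continuous_id.sub continuous_const).mul ?_).tendsto _
        have h1 : efun eps L 0 = fun _ : ℂ => (1:ℂ) := by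
          funext t; exact efun_zero eps L t
        rw [h1]; exact continuous_const
      simpa using hcont.mono_left nhdsWithin_le_nhds
    · exact tendsto_res_efun heps hL hj μ
  refine h.congr fun t => ?_
  rw [Finset.mul_sum]
  exact Finset.sum_congr rfl fun j _ => by ring


/-- **Expansion coefficients via residues** (Proposition 5.1 of the paper): if
`φ ∈ F(ε,L)` has expansion `φ = Σ_k c_k g_k`, and `e_m = Σ_k E(m,k) g_k` for `m ≥ 1`,
and `R m = Res_{t=A_m} φ(t) = lim_{t→A_m}(t−A_m)φ(t)`, `φ∞ = lim_{t→∞} φ(t)`, then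
`c_k = Σ_{m≥k} R m · E(m,k)` for `k ≥ 1` and `c_0 = φ∞ + Σ_{m≥1} R m · E(m,0)`;
in each sum only finitely many terms are nonzero. -/
theorem coefficients_via_residues
    (a eps : ℝ) (ha : -1 < a) (heps : 0 ≤ eps) (L : ℕ) (hL : 2 ≤ L)
    (φ : ℂ → ℂ) (hφ : InF eps L φ)
    (c : ℕ → ℂ) (hcfin : (Function.support c).Finite)
    (hc : ∀ t : ℂ, Adm eps L t → φ t = ∑ᶠ k : ℕ, c k * gfun a eps L k t)
    (E : ℕ → ℕ → ℂ) (hEfin : ∀ m, (Function.support (E m)).Finite)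
    (hE : ∀ m : ℕ, 1 ≤ m → ∀ t : ℂ, Adm eps L t →
      efun eps L m t = ∑ᶠ k : ℕ, E m k * gfun a eps L k t)
    (R : ℕ → ℂ)
    (hR : ∀ m : ℕ, 1 ≤ m →
      Filter.Tendsto (fun t : ℂ => (t - ((L:ℂ) + (eps:ℂ) + (m:ℂ) - 1)) * φ t)
        (nhdsWithin ((L:ℂ) + (eps:ℂ) + (m:ℂ) - 1) {((L:ℂ) + (eps:ℂ) + (m:ℂ) - 1)}ᶜ)
        (nhds (R m)))
    (φinf : ℂ)
    (hφinf : Filter.Tendsto φ (Bornology.cobounded ℂ) (nhds φinf)) :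
    {m : ℕ | 1 ≤ m ∧ R m ≠ 0}.Finite ∧
    (∀ k : ℕ, 1 ≤ k → c k = ∑ᶠ (m : ℕ) (_ : k ≤ m), R m * E m k) ∧
    c 0 = φinf + ∑ᶠ (m : ℕ) (_ : 1 ≤ m), R m * E m 0 := by
  classical
  obtain ⟨r, hrfin, hr⟩ := hφ
  set T : Finset ℕ := hrfin.toFinset with hT
  have hrT : ∀ j, j ∉ T → r j = 0 := by
    intro j hj
    by_contra h
    exact hj (hrfin.mem_toFinset.mpr h)
  have hrsum : ∀ t : ℂ, Adm eps L t → φ t = ∑ j ∈ T, r j * efun eps L j t := by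
    intro t ht
    rw [hr t ht]
    refine finsum_eq_finset_sum_of_support_subset _ fun j hj => ?_
    rw [Function.mem_support] at hj
    exact Finset.mem_coe.mpr (hrfin.mem_toFinset.mpr (left_ne_zero_of_mul hj))
  -- Step A : R m = r m for m ≥ 1
  have hRr : ∀ m, 1 ≤ m → R m = r m := by
    intro m hm
    have hpt := qq_point (eps := eps) (L := L) hm
    have h1 := hR m hm
    rw [hpt] at h1
    have h2 : Tendsto (fun t => (t - qq eps L (m-1)) * φ t)
        (nhdsWithin (qq eps L (m-1)) {(qq eps L (m-1))}ᶜ)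
        (nhds (∑ j ∈ T, r j * (if j = (m-1) + 1 then 1 else 0))) := by
      refine Tendsto.congr' ?_ (tendsto_res_phi_sum heps hL r T (m-1))
      filter_upwards [eventually_adm heps hL (m-1)] with t ht
      rw [hrsum t ht.1]
    have h3 := tendsto_nhds_unique h1 h2
    have hm1 : (m-1) + 1 = m := by omega
    rw [hm1] at h3
    rw [h3]
    simp only [mul_ite, mul_one, mul_zero]
    rw [Finset.sum_ite_eq' T m r]
    by_cases hmT : m ∈ T
    · rw [if_pos hmT]
    · rw [if_neg hmT, hrT m hmT]
  -- Step B : φinf = r 0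
  have hφ0 : φinf = r 0 := by
    have h1 : Tendsto (fun x : ℝ => φ (pp x)) atTop (nhds φinf) := hφinf.comp tendsto_pp
    have h2 : Tendsto (fun x : ℝ => ∑ j ∈ T, r j * efun eps L j (pp x)) atTop
        (nhds (∑ j ∈ T, r j * (if j = 0 then 1 else 0))) := by
      refine tendsto_finset_sum _ fun j _ => Tendsto.const_mul _ ?_
      rcases Nat.eq_zero_or_pos j with rfl | hj
      · rw [if_pos rfl]
        have h3 : (fun x : ℝ => efun eps L 0 (pp x)) = fun _ => (1:ℂ) := by
          funext x; exact efun_zero eps L (pp x)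
        rw [h3]; exact tendsto_const_nhds
      · rw [if_neg (by omega)]
        exact tendsto_efun_pp hj
    have h1' : Tendsto (fun x : ℝ => ∑ j ∈ T, r j * efun eps L j (pp x)) atTop (nhds φinf) := by
      refine Tendsto.congr (fun x => ?_) h1
      exact hrsum (pp x) (adm_pp heps hL x)
    have h3 := tendsto_nhds_unique h1' h2
    rw [h3]
    simp only [mul_ite, mul_one, mul_zero]
    rw [Finset.sum_ite_eq' T 0 r]
    by_cases h0T : 0 ∈ T
    · rw [if_pos h0T]
    · rw [if_neg h0T, hrT 0 h0T]
  -- bounds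
  choose NE hNE using fun m => exists_bound (hEfin m)
  obtain ⟨Nc, hNc⟩ := exists_bound hcfin
  set N : ℕ := max Nc (max (T.sup NE) (T.sup id + 1)) with hNdef
  have hN1 : 1 ≤ N := by
    have : T.sup id + 1 ≤ N := le_max_of_le_right (le_max_right _ _)
    omega
  have hck : ∀ k, N ≤ k → c k = 0 := fun k hk => hNc k (le_trans (le_max_left _ _) hk)
  have hEk : ∀ m ∈ T, ∀ k, N ≤ k → E m k = 0 := by
    intro m hm k hk
    refine hNE m k ?_
    have h1 : NE m ≤ T.sup NE := Finset.le_sup hm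
    have h2 : T.sup NE ≤ N := le_trans (le_max_left _ _) (le_max_right _ _)
    omega
  -- expansions over range N
  have hcexp : ∀ t : ℂ, Adm eps L t → φ t = ∑ k ∈ range N, c k * gfun a eps L k t := by
    intro t ht
    rw [hc t ht]
    refine finsum_eq_finset_sum_of_support_subset _ fun k hk => ?_
    rw [Function.mem_support] at hk
    have hck' : c k ≠ 0 := left_ne_zero_of_mul hk
    have : k < N := by
      by_contra h
      exact hck' (hck k (by omega))
    exact Finset.mem_coe.mpr (Finset.mem_range.mpr this)
  have hEexp : ∀ m ∈ T, 1 ≤ m → ∀ t : ℂ, Adm eps L t →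
      efun eps L m t = ∑ k ∈ range N, E m k * gfun a eps L k t := by
    intro m hmT hm t ht
    rw [hE m hm t ht]
    refine finsum_eq_finset_sum_of_support_subset _ fun k hk => ?_
    rw [Function.mem_support] at hk
    have hEk' : E m k ≠ 0 := left_ne_zero_of_mul hk
    have : k < N := by
      by_contra h
      exact hEk' (hEk m hmT k (by omega))
    exact Finset.mem_coe.mpr (Finset.mem_range.mpr this)
  -- the coefficient identity
  set D : ℕ → ℂ := fun k => c k - ((if k = 0 then r 0 else 0) + ∑ m ∈ T.erase 0, r m * E m k)
    with hD
  have hDsum : ∀ t : ℂ, Adm eps L t → ∑ k ∈ range N, D k * gfun a eps L k t = 0 := by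
    intro t ht
    have e1 : ∑ k ∈ range N, c k * gfun a eps L k t = φ t := (hcexp t ht).symm
    have e2 : ∑ k ∈ range N, (if k = 0 then r 0 else 0) * gfun a eps L k t = r 0 := by
      simp only [ite_mul, zero_mul]
      rw [Finset.sum_ite_eq' (range N) 0 (fun k => r 0 * gfun a eps L k t)]
      rw [if_pos (Finset.mem_range.mpr hN1), gfun_zero, mul_one]
    have hφ2 : φ t = r 0 + ∑ m ∈ T.erase 0, r m * efun eps L m t := by
      rw [hrsum t ht]
      by_cases h0 : 0 ∈ T
      · rw [← Finset.add_sum_erase T _ h0, efun_zero, mul_one]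
      · rw [Finset.erase_eq_of_notMem h0, hrT 0 h0, zero_add]
    have hsum2 : ∑ m ∈ T.erase 0, r m * efun eps L m t
        = ∑ k ∈ range N, (∑ m ∈ T.erase 0, r m * E m k) * gfun a eps L k t := by
      calc ∑ m ∈ T.erase 0, r m * efun eps L m t
          = ∑ m ∈ T.erase 0, ∑ k ∈ range N, r m * (E m k * gfun a eps L k t) := by
            refine Finset.sum_congr rfl fun m hm => ?_
            obtain ⟨hm0, hmT⟩ := Finset.mem_erase.mp hm
            rw [hEexp m hmT (by omega) t ht, Finset.mul_sum]
        _ = ∑ k ∈ range N, ∑ m ∈ T.erase 0, r m * (E m k * gfun a eps L k t) :=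
            Finset.sum_comm
        _ = ∑ k ∈ range N, (∑ m ∈ T.erase 0, r m * E m k) * gfun a eps L k t := by
            refine Finset.sum_congr rfl fun k _ => ?_
            rw [Finset.sum_mul]
            exact Finset.sum_congr rfl fun m _ => by ring
    have e3 : ∑ k ∈ range N, (∑ m ∈ T.erase 0, r m * E m k) * gfun a eps L k t
        = φ t - r 0 := by
      rw [← hsum2]; linear_combination -hφ2
    calc ∑ k ∈ range N, D k * gfun a eps L k t
        = (∑ k ∈ range N, c k * gfun a eps L k t)
          - ((∑ k ∈ range N, (if k = 0 then r 0 else 0) * gfun a eps L k t)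
            + ∑ k ∈ range N, (∑ m ∈ T.erase 0, r m * E m k) * gfun a eps L k t) := by
          rw [← Finset.sum_add_distrib, ← Finset.sum_sub_distrib]
          exact Finset.sum_congr rfl fun k _ => by rw [hD]; ring
      _ = 0 := by rw [e1, e2, e3]; ring
  have hD0 : ∀ k, N ≤ k → D k = 0 := by
    intro k hk
    rw [hD]
    simp only
    rw [hck k hk, if_neg (by omega)]
    have : ∑ m ∈ T.erase 0, r m * E m k = 0 := by
      refine Finset.sum_eq_zero fun m hm => ?_
      rw [hEk m (Finset.mem_of_mem_erase hm) k hk, mul_zero]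
    rw [this]; ring
  have hDall := indep ha heps hL D N hD0 hDsum
  have hstar : ∀ k, c k = (if k = 0 then r 0 else 0) + ∑ m ∈ T.erase 0, r m * E m k := by
    intro k
    have h1 := hDall k
    rw [hD] at h1
    simp only at h1
    linear_combination h1
  -- triangularity of E
  have hEtri : ∀ m ∈ T, 1 ≤ m → ∀ k, m + 1 ≤ k → E m k = 0 := by
    intro m hmT hm
    exact E_tri ha heps hL hm (E m) N (fun k hk => hEk m hmT k hk)
      (fun t ht => hEexp m hmT hm t ht)
  refine ⟨?_, ?_, ?_⟩
  · refine hrfin.subset fun m hm => ?_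
    obtain ⟨hm1, hmR⟩ := hm
    rw [Function.mem_support]
    rw [hRr m hm1] at hmR
    exact hmR
  · intro k hk
    set F : Finset ℕ := (T.erase 0).filter (fun m => k ≤ m) with hF
    have hfs : ∑ᶠ (m : ℕ) (_ : k ≤ m), R m * E m k = ∑ m ∈ F, R m * E m k := by
      refine finsum_mem_eq_sum_of_subset _ (fun m hm => ?_) (fun m hm => ?_)
      · obtain ⟨hkm, hsupp⟩ := hm
        rw [Function.mem_support] at hsupp
        have hm1 : 1 ≤ m := by
          have : k ≤ m := hkm
          omega
        have hrm : r m ≠ 0 := by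
          intro h0
          rw [hRr m hm1, h0, zero_mul] at hsupp
          exact hsupp rfl
        refine Finset.mem_filter.mpr ⟨Finset.mem_erase.mpr ⟨by omega, hrfin.mem_toFinset.mpr hrm⟩, hkm⟩
      · exact (Finset.mem_filter.mp hm).2
    rw [hfs]
    have hcF : c k = ∑ m ∈ F, r m * E m k := by
      rw [hstar k, if_neg (by omega), zero_add, hF]
      rw [Finset.sum_filter_of_ne]
      intro m hm hne
      by_contra hmk
      have hm1 : 1 ≤ m := by
        have := (Finset.mem_erase.mp hm).1
        omega
      have : E m k = 0 := hEtri m (Finset.mem_of_mem_erase hm) hm1 k (by omega)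
      rw [this, mul_zero] at hne
      exact hne rfl
    rw [hcF]
    refine Finset.sum_congr rfl fun m hm => ?_
    have hm1 : 1 ≤ m := by
      have := (Finset.mem_erase.mp (Finset.mem_filter.mp hm).1).1
      omega
    rw [hRr m hm1]
  · have hfs : ∑ᶠ (m : ℕ) (_ : 1 ≤ m), R m * E m 0 = ∑ m ∈ T.erase 0, R m * E m 0 := by
      refine finsum_mem_eq_sum_of_subset _ (fun m hm => ?_) (fun m hm => ?_)
      · obtain ⟨hm1, hsupp⟩ := hm
        rw [Function.mem_support] at hsupp
        have hm1' : 1 ≤ m := hm1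
        have hrm : r m ≠ 0 := by
          intro h0
          rw [hRr m hm1', h0, zero_mul] at hsupp
          exact hsupp rfl
        exact Finset.mem_erase.mpr ⟨by omega, hrfin.mem_toFinset.mpr hrm⟩
      · have := (Finset.mem_erase.mp hm).1
        show 1 ≤ m
        omega
    rw [hfs, hφ0, hstar 0, if_pos rfl]
    congr 1
    refine Finset.sum_congr rfl fun m hm => ?_
    have hm1 : 1 ≤ m := by
      have := (Finset.mem_erase.mp hm).1
      omega
    rw [hRr m hm1]
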